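/- Let K be a field of characteristic 0 and g a finite-dimensional Lie algebra over K. Then the canonical map ε : g → U(g) from g into its universal enveloping algebra is injective (Poincaré–Birkhoff–Witt). -/

import Mathlib

attribute [local instance 100] LieRing.ofAssociativeRing

namespace PBWAux

variable {K L : Type*} [Field K] [LieRing L] [LieAlgebra K L] {d : ℕ}

/-- ordered insertion -/
abbrev ins (i : Fin d) (w : List (Fin d)) : List (Fin d) := List.orderedInsert (· ≤ ·) i w

/-- The fundamental recursive construction underlying the PBW representation:
`core b k i w` is the action of the basis vector `b i` on the monomial `w`,
computed with fuel `k`. -/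
noncomputable def core (b : Module.Basis (Fin d) K L) : ℕ → Fin d → List (Fin d) → (List (Fin d) →₀ K)
  | 0, _, _ => 0
  | (k+1), i, [] => Finsupp.single [i] 1
  | (k+1), i, (j :: t) =>
    if (j :: t).Pairwise (· ≤ ·) then
      if i ≤ j then Finsupp.single (i :: j :: t) 1
      else (core b k i t).sum (fun u c => c • core b k j u)
        + (b.repr ⁅b i, b j⁆).sum fun i' c => c • core b k i' t
    else 0

variable (b : Module.Basis (Fin d) K L)

lemma core_nil (k : ℕ) (i : Fin d) : core b (k+1) i [] = Finsupp.single [i] 1 := rfl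

lemma core_unsorted {w : List (Fin d)} (h : ¬ w.Pairwise (· ≤ ·)) (k : ℕ) (i : Fin d) :
    core b k i w = 0 := by
  cases k with
  | zero => rfl
  | succ k =>
    cases w with
    | nil => exact absurd List.Pairwise.nil h
    | cons j t => simp only [core, if_neg h]

lemma core_good {w : List (Fin d)} (hw : w.Pairwise (· ≤ ·)) {i : Fin d} (h : ∀ a ∈ w, i ≤ a)
    (k : ℕ) : core b (k+1) i w = Finsupp.single (i :: w) 1 := by
  cases w with
  | nil => rfl
  | cons j t => simp only [core, if_pos hw, if_pos (h j (List.mem_cons_self))]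

lemma core_bad {j : Fin d} {t : List (Fin d)} (hw : (j :: t).Pairwise (· ≤ ·))
    {i : Fin d} (hij : ¬ i ≤ j) (k : ℕ) :
    core b (k+1) i (j :: t) = (core b k i t).sum (fun u c => c • core b k j u)
        + (b.repr ⁅b i, b j⁆).sum (fun i' c => c • core b k i' t) := by
  simp only [core, if_pos hw, if_neg hij]

lemma ins_of_le {w : List (Fin d)} {i : Fin d} (h : ∀ a ∈ w, i ≤ a) : ins i w = i :: w := by
  cases w with
  | nil => rfl
  | cons j t => simp [List.orderedInsert, h j (List.mem_cons_self)]

lemma mem_ins {u : Fin d} {i : Fin d} {w : List (Fin d)} :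
    u ∈ ins i w ↔ u = i ∨ u ∈ w := by
  rw [(List.perm_orderedInsert _ i w).mem_iff]; simp

lemma sorted_ins {i : Fin d} {w : List (Fin d)} (hw : w.Pairwise (· ≤ ·)) :
    (ins i w).Pairwise (· ≤ ·) := List.Pairwise.orderedInsert i w hw

lemma length_ins (i : Fin d) (w : List (Fin d)) : (ins i w).length = w.length + 1 :=
  List.orderedInsert_length _ w i


/-- Fuel-independence and support control for `core`. -/
theorem core_spec : ∀ (n : ℕ) (w : List (Fin d)), w.length ≤ n → w.Pairwise (· ≤ ·) →
    ∀ i : Fin d,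
    (∀ k, w.length + 1 ≤ k → core b k i w = core b (w.length + 1) i w) ∧
    (∀ u ∈ (core b (w.length + 1) i w - Finsupp.single (ins i w) 1).support,
      u.Pairwise (· ≤ ·) ∧ u.length ≤ w.length) := by
  intro n
  induction n with
  | zero =>
    intro w hlen hw i
    rw [List.length_eq_zero_iff.mp (Nat.le_zero.mp hlen)]
    refine ⟨fun k hk => ?_, fun u hu => ?_⟩
    · cases k with
      | zero => omega
      | succ k' => rfl
    · simp only [List.length_nil, zero_add, core_nil] at hu
      rw [ins_of_le (by simp), sub_self] at hu
      simp at hu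
  | succ n IH =>
    intro w hlen hw i
    match w with
    | [] =>
      refine ⟨fun k hk => ?_, fun u hu => ?_⟩
      · cases k with
        | zero => omega
        | succ k' => rfl
      · simp only [List.length_nil, zero_add, core_nil] at hu
        rw [ins_of_le (by simp), sub_self] at hu
        simp at hu
    | j :: t =>
      by_cases hij : i ≤ j
      · -- good case
        have hgood : ∀ a ∈ j :: t, i ≤ a := by
          intro a ha
          rcases List.mem_cons.mp ha with rfl | ha
          · exact hij
          · exact le_trans hij (List.rel_of_pairwise_cons hw ha)
        refine ⟨fun k hk => ?_, fun u hu => ?_⟩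
        · cases k with
          | zero => omega
          | succ k' =>
            rw [core_good b hw hgood, core_good b hw hgood ((j :: t).length)]
        · rw [core_good b hw hgood, ins_of_le hgood, sub_self] at hu
          simp at hu
      · -- bad case
        have ht : t.Pairwise (· ≤ ·) := hw.of_cons
        have hlt : t.length ≤ n := by simpa using Nat.succ_le_succ_iff.mp hlen
        have hjt : ∀ a ∈ t, j ≤ a := fun a ha => List.rel_of_pairwise_cons hw ha
        have hji : j ≤ i := le_of_not_ge hij
        -- the canonical remainder of core on t
        set rt := core b (t.length + 1) i t - Finsupp.single (ins i t) 1 with hrt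
        have hcore_t : core b (t.length + 1) i t = Finsupp.single (ins i t) 1 + rt := by
          rw [hrt]; abel
        have hins_mem : ∀ a ∈ ins i t, j ≤ a := by
          intro a ha
          rcases mem_ins.mp ha with rfl | ha
          · exact hji
          · exact hjt a ha
        have hins_sorted := sorted_ins (i := i) ht
        -- key computation, for any sufficient fuel
        have key : ∀ k, t.length + 1 ≤ k → core b (k+1) i (j :: t)
            = Finsupp.single (j :: ins i t) 1
              + rt.sum (fun u c => c • core b (u.length + 1) j u)
              + (b.repr ⁅b i, b j⁆).sum (fun i' c => c • core b (t.length + 1) i' t) := by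
          intro k hk
          rw [core_bad b hw hij]
          have h1 : core b k i t = core b (t.length + 1) i t :=
            ((IH t hlt ht i).1 k hk)
          rw [h1, hcore_t]
          rw [Finsupp.sum_add_index' (fun u => by simp) (fun u c c' => by rw [add_smul])]
          have h2 : (Finsupp.single (ins i t) (1:K)).sum (fun u c => c • core b k j u)
              = Finsupp.single (j :: ins i t) 1 := by
            rw [Finsupp.sum_single_index (by simp)]
            cases k with
            | zero => omega
            | succ k' => rw [one_smul, core_good b hins_sorted hins_mem]
          have h3 : rt.sum (fun u c => c • core b k j u)
              = rt.sum (fun u c => c • core b (u.length + 1) j u) := by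
            refine Finsupp.sum_congr (fun u hu => ?_)
            obtain ⟨hu1, hu2⟩ := (IH t hlt ht i).2 u hu
            rw [(IH u (le_trans hu2 hlt) hu1 j).1 k (le_trans (Nat.succ_le_succ hu2) hk)]
          have h4 : (b.repr ⁅b i, b j⁆).sum (fun i' c => c • core b k i' t)
              = (b.repr ⁅b i, b j⁆).sum (fun i' c => c • core b (t.length + 1) i' t) := by
            refine Finsupp.sum_congr (fun i' _ => ?_)
            rw [(IH t hlt ht i').1 k hk]
          rw [h2, h3, h4]
        have hlen_cons : (j :: t).length = t.length + 1 := rfl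
        constructor
        · intro k hk
          rw [hlen_cons] at hk ⊢
          cases k with
          | zero => omega
          | succ k' => rw [key k' (by omega), key (t.length + 1) le_rfl]
        · intro u hu
          rw [hlen_cons, key (t.length + 1) le_rfl] at hu
          have hins_cons : ins i (j :: t) = j :: ins i t := by
            simp [ins, List.orderedInsert, hij]
          rw [hins_cons] at hu
          have : Finsupp.single (j :: ins i t) (1:K)
                + rt.sum (fun u c => c • core b (u.length + 1) j u)
                + (b.repr ⁅b i, b j⁆).sum (fun i' c => c • core b (t.length + 1) i' t)
                - Finsupp.single (j :: ins i t) 1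
              = rt.sum (fun u c => c • core b (u.length + 1) j u)
                + (b.repr ⁅b i, b j⁆).sum (fun i' c => c • core b (t.length + 1) i' t) := by
            abel
          rw [this] at hu
          -- now analyze support
          rcases Finset.mem_union.mp (Finsupp.support_add hu) with hu | hu
          · obtain ⟨v, hv, huv⟩ := Finset.mem_biUnion.mp (Finsupp.support_sum hu)
            obtain ⟨hv1, hv2⟩ := (IH t hlt ht i).2 v hv
            have huv' : u ∈ (core b (v.length + 1) j v).support :=
              Finsupp.support_smul huv
            -- decompose core on v
            have hdec : core b (v.length + 1) j v
                = Finsupp.single (ins j v) 1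
                  + (core b (v.length + 1) j v - Finsupp.single (ins j v) 1) := by abel
            rw [hdec] at huv'
            rcases Finset.mem_union.mp (Finsupp.support_add huv') with h | h
            · have := Finsupp.support_single_subset h
              simp only [Finset.mem_singleton] at this
              subst this
              exact ⟨sorted_ins hv1, by simp only [length_ins, List.length_cons]; omega⟩
            · obtain ⟨h1, h2⟩ := (IH v (le_trans hv2 hlt) hv1 j).2 u h
              exact ⟨h1, by omega⟩
          · obtain ⟨i', hi', hui⟩ := Finset.mem_biUnion.mp (Finsupp.support_sum hu)
            have hui' : u ∈ (core b (t.length + 1) i' t).support :=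
              Finsupp.support_smul hui
            have hdec : core b (t.length + 1) i' t
                = Finsupp.single (ins i' t) 1
                  + (core b (t.length + 1) i' t - Finsupp.single (ins i' t) 1) := by abel
            rw [hdec] at hui'
            rcases Finset.mem_union.mp (Finsupp.support_add hui') with h | h
            · have := Finsupp.support_single_subset h
              simp only [Finset.mem_singleton] at this
              subst this
              exact ⟨sorted_ins ht, by simp [length_ins]⟩
            · obtain ⟨h1, h2⟩ := (IH t hlt ht i').2 u h
              exact ⟨h1, by omega⟩


/-! ### The representation -/

/-- The action of the basis vector `b i` on the free vector space over monomials. -/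
noncomputable def act (i : Fin d) : (List (Fin d) →₀ K) →ₗ[K] (List (Fin d) →₀ K) :=
  Finsupp.lift _ K _ (fun w => core b (w.length + 1) i w)

/-- The PBW representation of `L`. -/
noncomputable def rho : L →ₗ[K] Module.End K (List (Fin d) →₀ K) :=
  b.constr ℕ (fun i => act b i)

lemma act_apply (i : Fin d) (v : List (Fin d) →₀ K) :
    act b i v = v.sum fun u c => c • core b (u.length + 1) i u := by
  simp [act, Finsupp.lift_apply]

lemma act_single (i : Fin d) (w : List (Fin d)) :
    act b i (Finsupp.single w 1) = core b (w.length + 1) i w := by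
  rw [act_apply, Finsupp.sum_single_index (by simp), one_smul]

lemma rho_basis (i : Fin d) : rho b (b i) = act b i := by
  exact b.constr_basis ℕ (fun i => act b i) i

lemma rho_basis_single (i : Fin d) (w : List (Fin d)) :
    rho b (b i) (Finsupp.single w 1) = core b (w.length + 1) i w := by
  rw [rho_basis, act_single]

lemma rho_single (x : L) (w : List (Fin d)) :
    rho b x (Finsupp.single w 1) = (b.repr x).sum fun i c => c • core b (w.length + 1) i w := by
  rw [rho, Module.Basis.constr_apply, Finsupp.sum, Finsupp.sum, LinearMap.sum_apply]
  refine Finset.sum_congr rfl fun i _ => ?_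
  rw [LinearMap.smul_apply, act_single]

lemma rho_single_unsorted (x : L) {w : List (Fin d)} (h : ¬ w.Pairwise (· ≤ ·)) :
    rho b x (Finsupp.single w 1) = 0 := by
  rw [rho_single]
  refine Finset.sum_eq_zero fun i _ => ?_
  simp only [core_unsorted b h, smul_zero]

lemma core_fuel {w : List (Fin d)} (hw : w.Pairwise (· ≤ ·)) (i : Fin d) {k : ℕ}
    (hk : w.length + 1 ≤ k) : core b k i w = core b (w.length + 1) i w :=
  (core_spec b w.length w le_rfl hw i).1 k hk

lemma core_support {w : List (Fin d)} (hw : w.Pairwise (· ≤ ·)) (i : Fin d) {u : List (Fin d)}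
    (hu : u ∈ (core b (w.length + 1) i w).support) :
    u.Pairwise (· ≤ ·) ∧ (u.length ≤ w.length ∨ u = ins i w) := by
  have hdec : core b (w.length + 1) i w
      = Finsupp.single (ins i w) 1
        + (core b (w.length + 1) i w - Finsupp.single (ins i w) 1) := by abel
  rw [hdec] at hu
  rcases Finset.mem_union.mp (Finsupp.support_add hu) with h | h
  · have := Finsupp.support_single_subset h
    simp only [Finset.mem_singleton] at this
    exact ⟨this ▸ sorted_ins hw, Or.inr this⟩
  · obtain ⟨h1, h2⟩ := (core_spec b w.length w le_rfl hw i).2 u h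
    exact ⟨h1, Or.inl h2⟩

/-- The commutator defect. -/
noncomputable def D (x y : L) : Module.End K (List (Fin d) →₀ K) :=
  rho b ⁅x, y⁆ - (rho b x * rho b y - rho b y * rho b x)

lemma D_apply (x y : L) (v : List (Fin d) →₀ K) :
    D b x y v = rho b ⁅x, y⁆ v - rho b x (rho b y v) + rho b y (rho b x v) := by
  simp [D, Module.End.mul_apply, sub_add]

lemma D_skew (x y : L) : D b x y = - D b y x := by
  simp only [D, ← lie_skew x y, map_neg]
  abel

/-- The bilinearized commutator defect. -/
noncomputable def Dbil : L →ₗ[K] L →ₗ[K] Module.End K (List (Fin d) →₀ K) :=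
  LinearMap.mk₂ K (fun x y => D b x y)
    (fun x x' y => by simp only [D, add_lie, map_add, add_mul, mul_add]; abel)
    (fun c x y => by
      simp only [D, smul_lie, map_smul, smul_mul_assoc, mul_smul_comm]
      module)
    (fun x y y' => by simp only [D, lie_add, map_add, add_mul, mul_add]; abel)
    (fun c x y => by
      simp only [D, lie_smul, map_smul, smul_mul_assoc, mul_smul_comm]
      module)

lemma D_eq_zero_of_basis (v : List (Fin d) →₀ K)
    (h : ∀ i j : Fin d, D b (b i) (b j) v = 0) (x y : L) : D b x y v = 0 := by
  have hD : D b x y = Dbil b x y := rfl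
  rw [hD, ← b.sum_repr x, ← b.sum_repr y]
  simp only [map_sum, map_smul, LinearMap.sum_apply, LinearMap.smul_apply,
    LinearMap.coe_sum, Finset.sum_apply]
  refine Finset.sum_eq_zero fun i _ => ?_
  rw [Finset.smul_sum]
  refine Finset.sum_eq_zero fun j _ => ?_
  have h' : (((Dbil b) (b j)) (b i)) v = 0 := h j i
  rw [h', smul_zero, smul_zero]

lemma end_zero_on_support (F : Module.End K (List (Fin d) →₀ K)) (v : List (Fin d) →₀ K)
    (h : ∀ m ∈ v.support, F (Finsupp.single m 1) = 0) : F v = 0 := by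
  conv_lhs => rw [← Finsupp.sum_single v]
  rw [map_finsuppSum]
  refine Finset.sum_eq_zero fun m hm => ?_
  show F (Finsupp.single m (v m)) = 0
  rw [← Finsupp.smul_single_one m (v m), map_smul, h m hm, smul_zero]

lemma comm_of_D_zero {x y : L} {v : List (Fin d) →₀ K} (h : D b x y v = 0) :
    rho b x (rho b y v) = rho b y (rho b x v) + rho b ⁅x, y⁆ v := by
  rw [D_apply] at h
  rw [← sub_eq_zero]
  have hh : rho b x (rho b y v) - (rho b y (rho b x v) + rho b ⁅x, y⁆ v)
      = -(rho b ⁅x, y⁆ v - rho b x (rho b y v) + rho b y (rho b x v)) := by abel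
  rw [hh, h, neg_zero]

/-- Case 1 of the commutation relation: `j ≤ i` and `j` is below everything in `w`. -/
lemma comm_good {w : List (Fin d)} (hw : w.Pairwise (· ≤ ·)) {i j : Fin d} (hji : j ≤ i)
    (hj : ∀ a ∈ w, j ≤ a) : D b (b i) (b j) (Finsupp.single w 1) = 0 := by
  by_cases hij : i ≤ j
  · have : i = j := le_antisymm hij hji
    subst this
    simp [D]
  · -- j < i
    have hjw : (j :: w).Pairwise (· ≤ ·) := List.pairwise_cons.mpr ⟨hj, hw⟩
    have e1 : rho b (b j) (Finsupp.single w 1) = Finsupp.single (j :: w) 1 := by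
      rw [rho_basis_single, core_good b hw hj]
    have e2 : rho b (b i) (Finsupp.single (j :: w) 1)
        = (core b (w.length + 1) i w).sum (fun u c => c • core b (w.length + 1) j u)
          + (b.repr ⁅b i, b j⁆).sum (fun i' c => c • core b (w.length + 1) i' w) := by
      rw [rho_basis_single]
      exact core_bad b hjw hij (w.length + 1)
    have claimA : (core b (w.length + 1) i w).sum (fun u c => c • core b (w.length + 1) j u)
        = rho b (b j) (rho b (b i) (Finsupp.single w 1)) := by
      rw [rho_basis_single, rho_basis, act_apply]
      refine Finsupp.sum_congr fun u hu => ?_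
      obtain ⟨hu1, hu2⟩ := core_support b hw i hu
      rcases hu2 with h | rfl
      · rw [core_fuel b hu1 j (by omega)]
      · have hins : ∀ a ∈ ins i w, j ≤ a := by
          intro a ha
          rcases mem_ins.mp ha with rfl | ha
          · exact hji
          · exact hj a ha
        rw [core_good b hu1 hins w.length]
        have : (ins i w).length = w.length + 1 := length_ins i w
        rw [show (ins i w).length + 1 = w.length + 1 + 1 from by omega] at *
        rw [core_good b hu1 hins (w.length + 1)]
    have claimB : (b.repr ⁅b i, b j⁆).sum (fun i' c => c • core b (w.length + 1) i' w)
        = rho b ⁅b i, b j⁆ (Finsupp.single w 1) := (rho_single b _ w).symm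
    rw [D_apply, e1, e2, claimA, claimB]
    abel

/-- Case-1-based expansion: the action of anything on a monomial `l :: t`
(where `l` is below everything). -/
lemma comm_low {l : Fin d} {t : List (Fin d)} (hw : (l :: t).Pairwise (· ≤ ·)) (y : L) :
    rho b y (Finsupp.single (l :: t) 1)
      = rho b (b l) (rho b y (Finsupp.single t 1))
        + rho b ⁅y, b l⁆ (Finsupp.single t 1) := by
  have ht : t.Pairwise (· ≤ ·) := hw.of_cons
  have hlt : ∀ a ∈ t, l ≤ a := fun a ha => List.rel_of_pairwise_cons hw ha
  -- bundle both sides as linear maps in `y`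
  have key : ∀ i' : Fin d, rho b (b i') (Finsupp.single (l :: t) 1)
      = rho b (b l) (rho b (b i') (Finsupp.single t 1))
        + rho b ⁅b i', b l⁆ (Finsupp.single t 1) := by
    intro i'
    by_cases hil : i' ≤ l
    · -- good case for i'
      have hit : ∀ a ∈ l :: t, i' ≤ a := by
        intro a ha
        rcases List.mem_cons.mp ha with rfl | ha
        · exact hil
        · exact le_trans hil (hlt a ha)
      have e1 := comm_of_D_zero b (comm_good b ht hil (fun a ha => le_trans hil (hlt a ha)))
      have e2 : rho b (b l) (Finsupp.single t 1) = Finsupp.single (l :: t) 1 := by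
        rw [rho_basis_single, core_good b ht hlt]
      have e3 : rho b ⁅b l, b i'⁆ (Finsupp.single t 1)
            + rho b ⁅b i', b l⁆ (Finsupp.single t 1) = 0 := by
        rw [← lie_skew (b i') (b l), map_neg, LinearMap.neg_apply]
        abel
      rw [e1, e2, add_assoc, e3, add_zero]
    · -- bad case, definitional
      have e2 : rho b (b i') (Finsupp.single (l :: t) 1)
          = (core b (t.length + 1) i' t).sum (fun u c => c • core b (t.length + 1) l u)
            + (b.repr ⁅b i', b l⁆).sum (fun i'' c => c • core b (t.length + 1) i'' t) := by
        rw [rho_basis_single]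
        exact core_bad b hw hil (t.length + 1)
      have claimA : (core b (t.length + 1) i' t).sum (fun u c => c • core b (t.length + 1) l u)
          = rho b (b l) (rho b (b i') (Finsupp.single t 1)) := by
        rw [rho_basis_single, rho_basis, act_apply]
        refine Finsupp.sum_congr fun u hu => ?_
        obtain ⟨hu1, hu2⟩ := core_support b ht i' hu
        rcases hu2 with h | rfl
        · rw [core_fuel b hu1 l (by omega)]
        · have hins : ∀ a ∈ ins i' t, l ≤ a := by
            intro a ha
            rcases mem_ins.mp ha with rfl | ha
            · exact le_of_not_ge hil
            · exact hlt a ha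
          rw [core_good b hu1 hins t.length]
          rw [show (ins i' t).length + 1 = t.length + 1 + 1 from by rw [length_ins]] 
          rw [core_good b hu1 hins (t.length + 1)]
      have claimB : (b.repr ⁅b i', b l⁆).sum (fun i'' c => c • core b (t.length + 1) i'' t)
          = rho b ⁅b i', b l⁆ (Finsupp.single t 1) := (rho_single b _ t).symm
      rw [e2, claimA, claimB]
  -- extend to all y by linearity
  let F1 : L →ₗ[K] (List (Fin d) →₀ K) :=
    (LinearMap.applyₗ (Finsupp.single (l :: t) 1)).comp (rho b)
  let F2 : L →ₗ[K] (List (Fin d) →₀ K) :=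
    (rho b (b l)).comp ((LinearMap.applyₗ (Finsupp.single t 1)).comp (rho b))
  let F3 : L →ₗ[K] (List (Fin d) →₀ K) :=
    (LinearMap.applyₗ (Finsupp.single t 1)).comp
      ((rho b).comp (-(LieAlgebra.ad K L (b l))))
  have hF : F1 = F2 + F3 := by
    refine b.ext fun i' => ?_
    have happ : ∀ (v : List (Fin d) →₀ K) (f : Module.End K (List (Fin d) →₀ K)),
        LinearMap.applyₗ v f = f v := fun _ _ => rfl
    have h3 : F3 (b i') = rho b ⁅b i', b l⁆ (Finsupp.single t 1) := by
      simp only [F3, LinearMap.comp_apply, LinearMap.neg_apply,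
        LieAlgebra.ad_apply, happ]
      simp [map_neg]
    simp only [F1, F2, LinearMap.comp_apply, happ, LinearMap.add_apply, h3]
    exact key i'
  have happ : ∀ (v : List (Fin d) →₀ K) (f : Module.End K (List (Fin d) →₀ K)),
      LinearMap.applyₗ v f = f v := fun _ _ => rfl
  have h5 := congrArg (fun F : L →ₗ[K] (List (Fin d) →₀ K) => F y) hF
  simp only [F1, F2, F3, LinearMap.comp_apply, happ, LinearMap.add_apply,
    LinearMap.neg_apply, LieAlgebra.ad_apply, map_neg] at h5
  rw [h5, ← lie_skew (b l) y, map_neg, LinearMap.neg_apply, neg_neg]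


/-! ### The main commutation theorem -/

theorem D_zero (n : ℕ) : ∀ (w : List (Fin d)), w.Pairwise (· ≤ ·) → w.length ≤ n →
    ∀ x y : L, D b x y (Finsupp.single w 1) = 0 := by
  induction n with
  | zero =>
    intro w hw hlen x y
    have hw0 : w = [] := List.length_eq_zero_iff.mp (Nat.le_zero.mp hlen)
    subst hw0
    refine D_eq_zero_of_basis b _ (fun i j => ?_) x y
    rcases le_total j i with h | h
    · exact comm_good b List.Pairwise.nil h (by simp)
    · rw [D_skew, LinearMap.neg_apply, comm_good b List.Pairwise.nil h (by simp), neg_zero]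
  | succ n IH =>
    intro w hw hlen x y
    refine D_eq_zero_of_basis b _ (fun i j => ?_) x y
    suffices H : ∀ i j : Fin d, j ≤ i → D b (b i) (b j) (Finsupp.single w 1) = 0 by
      rcases le_total j i with h | h
      · exact H i j h
      · rw [D_skew, LinearMap.neg_apply, H j i h, neg_zero]
    clear i j
    intro i j hji
    by_cases hj : ∀ a ∈ w, j ≤ a
    · exact comm_good b hw hji hj
    · cases w with
      | nil => exact absurd (by simp) hj
      | cons l t =>
        push_neg at hj
        obtain ⟨a, ha, haj⟩ := hj
        have ht : t.Pairwise (· ≤ ·) := hw.of_cons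
        have hlt : ∀ c ∈ t, l ≤ c := fun c hc => List.rel_of_pairwise_cons hw hc
        have hla : l ≤ a := by
          rcases List.mem_cons.mp ha with rfl | ha'
          · exact le_refl _
          · exact hlt a ha'
        have hlj : l < j := lt_of_le_of_lt hla haj
        have hli : l < i := lt_of_lt_of_le hlj hji
        have hlen_t : t.length ≤ n := by simpa using Nat.succ_le_succ_iff.mp hlen
        have IHt : ∀ x y : L, D b x y (Finsupp.single t 1) = 0 :=
          fun x y => IH t ht hlen_t x y
        -- commutation of (b i, b l) over the vector ρ(b j) z_t, and symmetrically
        have dag : ∀ (i₀ j₀ : Fin d), l ≤ i₀ → l ≤ j₀ →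
            D b (b i₀) (b l) (rho b (b j₀) (Finsupp.single t 1)) = 0 := by
          intro i₀ j₀ hi₀ hj₀
          refine end_zero_on_support (D b (b i₀) (b l)) _ fun m hm => ?_
          rw [rho_basis_single] at hm
          obtain ⟨hm1, hm2⟩ := core_support b ht j₀ hm
          rcases hm2 with hshort | rfl
          · exact IH m hm1 (le_trans hshort hlen_t) (b i₀) (b l)
          · refine comm_good b hm1 hi₀ fun c hc => ?_
            rcases mem_ins.mp hc with rfl | hc'
            · exact hj₀
            · exact hlt c hc'
        have h1 := comm_of_D_zero b (dag i j (le_of_lt hli) (le_of_lt hlj))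
        have h2 := comm_of_D_zero b (dag j i (le_of_lt hlj) (le_of_lt hli))
        have h3 := comm_of_D_zero b (IHt (b i) ⁅b j, b l⁆)
        have h4 := comm_of_D_zero b (IHt (b j) ⁅b i, b l⁆)
        have h5 := comm_of_D_zero b (IHt (b i) (b j))
        have h6 : ⁅⁅b i, b j⁆, b l⁆ = ⁅b i, ⁅b j, b l⁆⁆ - ⁅b j, ⁅b i, b l⁆⁆ := by
          rw [leibniz_lie]; abel
        rw [D_apply, comm_low b hw (b j), comm_low b hw (b i), comm_low b hw ⁅b i, b j⁆,
          map_add, map_add, h1, h2, h3, h4, h6, map_sub, LinearMap.sub_apply, h5, map_add]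
        abel

/-! ### Assembling the Lie algebra morphism -/

lemma rho_bracket (x y : L) :
    rho b ⁅x, y⁆ = rho b x * rho b y - rho b y * rho b x := by
  have hD : D b x y = 0 := by
    refine Finsupp.lhom_ext fun w c => ?_
    rw [← Finsupp.smul_single_one w c, map_smul]
    by_cases hw : w.Pairwise (· ≤ ·)
    · rw [D_zero b w.length w hw le_rfl x y, smul_zero, map_smul, LinearMap.zero_apply,
        smul_zero]
    · rw [D_apply, rho_single_unsorted b _ hw, rho_single_unsorted b _ hw,
        rho_single_unsorted b _ hw, map_zero, map_zero]
      simp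
  calc rho b ⁅x, y⁆ = D b x y + (rho b x * rho b y - rho b y * rho b x) := by
        rw [D]; abel
    _ = rho b x * rho b y - rho b y * rho b x := by rw [hD, zero_add]

/-- The PBW representation as a morphism of Lie algebras. -/
noncomputable def rhoLie : L →ₗ⁅K⁆ Module.End K (List (Fin d) →₀ K) :=
  { rho b with
    map_lie' := by
      intro x y
      rw [Ring.lie_def]
      exact rho_bracket b x y }

lemma rhoLie_apply (x : L) : rhoLie b x = rho b x := rfl

/-! ### The retraction -/

/-- Linear retraction extracting the degree-one component. -/
noncomputable def tau : (List (Fin d) →₀ K) →ₗ[K] L :=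
  Finsupp.lift L K (List (Fin d)) (fun w => match w with | [i] => b i | _ => 0)

lemma tau_single (i : Fin d) : tau b (Finsupp.single [i] 1) = b i := by
  simp [tau, Finsupp.lift_apply, Finsupp.sum_single_index]

lemma tau_rho (x : L) : tau b (rho b x (Finsupp.single [] 1)) = x := by
  rw [rho_single]
  have hc : ∀ i : Fin d, core b (List.length ([] : List (Fin d)) + 1) i [] =
      Finsupp.single [i] 1 := fun i => rfl
  simp only [hc]
  rw [map_finsuppSum]
  simp only [map_smul, tau_single]
  rw [← Finsupp.linearCombination_apply, Module.Basis.linearCombination_repr]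

end PBWAux

/-- **Poincaré–Birkhoff–Witt.** For a finite-dimensional Lie algebra `L` over a field
`K` of characteristic `0`, the canonical map `ε : L → U(L)` into the universal
enveloping algebra is injective. -/
theorem pbw_injective (K L : Type*) [Field K] [CharZero K]
    [LieRing L] [LieAlgebra K L] [FiniteDimensional K L] :
    Function.Injective (UniversalEnvelopingAlgebra.ι K : L →ₗ⁅K⁆ UniversalEnvelopingAlgebra K L) := by
  classical
  let b := Module.finBasis K L
  intro x y hxy
  have h1 : PBWAux.rhoLie b x = PBWAux.rhoLie b y := by
    have h := congrArg (UniversalEnvelopingAlgebra.lift K (PBWAux.rhoLie b)) hxy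
    rwa [UniversalEnvelopingAlgebra.lift_ι_apply, UniversalEnvelopingAlgebra.lift_ι_apply] at h
  have h2 : PBWAux.rho b x = PBWAux.rho b y := h1
  calc x = PBWAux.tau b (PBWAux.rho b x (Finsupp.single [] 1)) := (PBWAux.tau_rho b x).symm
    _ = PBWAux.tau b (PBWAux.rho b y (Finsupp.single [] 1)) := by rw [h2]
    _ = y := PBWAux.tau_rho b y

-- #print axioms pbw_injective
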